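/- There exists a deterministic apple tasting learner making at most AL_1(H) mistakes in the realizable setting: the learner maintains the version space V_t, predicts 1 if some h ∈ V_t has h(x_t) = 1 and 0 otherwise, and updates V_t only when it predicts 1; this learner makes at most AL_1(H) mistakes on any realizable stream. -/

import Mathlib

/-- `ALShatter H w d` : the hypothesis class `H` shatters some Apple Littlestone tree of
width `w` and depth `d`. Width `0` means the path has already ended (took the maximal
number of right/1 edges), in which case shattering only requires a consistent hypothesis. -/
def ALShatter {X : Type*} : Set (X → Bool) → ℕ → ℕ → Prop
  | H, _, 0 => H.Nonempty
  | H, 0, _ + 1 => H.Nonempty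
  | H, w + 1, d + 1 =>
      ∃ x : X, ALShatter {h | h ∈ H ∧ h x = false} (w + 1) d ∧
               ALShatter {h | h ∈ H ∧ h x = true} w d

/-- The Apple Littlestone dimension of `H` at width `w`. -/
noncomputable def ALdim {X : Type*} (H : Set (X → Bool)) (w : ℕ) : ℕ∞ :=
  sSup {d : ℕ∞ | ∃ n : ℕ, ALShatter H w n ∧ d = (n : ℕ∞)}

/-- `LShatter H d` : `H` shatters some Littlestone tree of depth `d`. -/
def LShatter {X : Type*} : Set (X → Bool) → ℕ → Prop
  | H, 0 => H.Nonempty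
  | H, d + 1 =>
      ∃ x : X, LShatter {h | h ∈ H ∧ h x = false} d ∧
               LShatter {h | h ∈ H ∧ h x = true} d

/-- The Littlestone dimension of `H`. -/
noncomputable def Ldim {X : Type*} (H : Set (X → Bool)) : ℕ∞ :=
  sSup {d : ℕ∞ | ∃ n : ℕ, LShatter H n ∧ d = (n : ℕ∞)}

/-- The Effective width of `H`: the least width `w ≥ 1` at which the
Apple Littlestone dimension is finite. -/
noncomputable def EffW {X : Type*} (H : Set (X → Bool)) : ℕ∞ :=
  sInf {w : ℕ∞ | ∃ n : ℕ, 1 ≤ n ∧ ALdim H n ≠ ⊤ ∧ w = (n : ℕ∞)}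

open Classical in
/-- The version space maintained by the deterministic apple-tasting learner: predict 1
iff some hypothesis in the current version space labels the instance with 1, and update
the version space (using the observed label) only on rounds where 1 was predicted. -/
noncomputable def VSpace {X : Type*} (H : Set (X → Bool)) (x : ℕ → X) (y : ℕ → Bool) :
    ℕ → Set (X → Bool)
  | 0 => H
  | t + 1 =>
      let V := VSpace H x y t
      if ∃ h ∈ V, h (x t) = true then {h | h ∈ V ∧ h (x t) = y t} else V


section Aux
open Classical
variable {X : Type*}

lemma alshatter_zero_depth {H : Set (X → Bool)} (w : ℕ) :
    ALShatter H w 0 ↔ H.Nonempty := by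
  cases w <;> exact Iff.rfl

lemma alshatter_mono : ∀ (d w : ℕ) {H H' : Set (X → Bool)}, H ⊆ H' →
    ALShatter H w d → ALShatter H' w d := by
  intro d
  induction d with
  | zero =>
    intro w H H' hs h
    rw [alshatter_zero_depth] at h ⊢
    obtain ⟨g, hg⟩ := h
    exact ⟨g, hs hg⟩
  | succ d ih =>
    intro w H H' hs h
    match w with
    | 0 =>
      obtain ⟨g, hg⟩ := h
      exact ⟨g, hs hg⟩
    | w + 1 =>
      obtain ⟨x, h0, h1⟩ := h
      exact ⟨x, ih _ (fun g hg => ⟨hs hg.1, hg.2⟩) h0,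
             ih _ (fun g hg => ⟨hs hg.1, hg.2⟩) h1⟩

lemma alshatter_zero_width {H : Set (X → Bool)} (hn : H.Nonempty) (d : ℕ) :
    ALShatter H 0 d := by
  cases d <;> exact hn

lemma mem_vspace {H : Set (X → Bool)} {h : X → Bool} (hh : h ∈ H) (x : ℕ → X) :
    ∀ t, h ∈ VSpace H x (fun s => h (x s)) t := by
  intro t
  induction t with
  | zero => exact hh
  | succ t ih =>
    simp only [VSpace]
    split
    · exact ⟨ih, rfl⟩
    · exact ih

lemma vspace_succ_subset {H : Set (X → Bool)} (x : ℕ → X) (y : ℕ → Bool) (t : ℕ) :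
    VSpace H x y (t + 1) ⊆ VSpace H x y t := by
  simp only [VSpace]
  split
  · intro g hg; exact hg.1
  · exact fun g hg => hg

lemma vspace_key {H : Set (X → Bool)} {h : X → Bool} (hh : h ∈ H) (x : ℕ → X) :
    ∀ (n t : ℕ), ALShatter (VSpace H x (fun s => h (x s)) t) 1
      (((Finset.Ico t (t + n)).filter fun t' =>
        ¬ ((∃ g ∈ VSpace H x (fun s => h (x s)) t', g (x t') = true) ↔
            h (x t') = true)).card) := by
  intro n
  induction n with
  | zero =>
    intro t
    simp only [Nat.add_zero, Finset.Ico_self, Finset.filter_empty, Finset.card_empty]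
    exact ⟨h, mem_vspace hh x t⟩
  | succ n ih =>
    intro t
    set y := fun s => h (x s) with hy
    set M := fun t' => ¬ ((∃ g ∈ VSpace H x y t', g (x t') = true) ↔ h (x t') = true)
      with hM
    have hlt : t < t + (n + 1) := by omega
    have hIco : Finset.Ico t (t + (n + 1)) = insert t (Finset.Ico (t + 1) (t + 1 + n)) := by
      have h2 : t + (n + 1) = t + 1 + n := by omega
      rw [h2, Finset.Ico_add_one_left_eq_Ioo, Finset.Ioo_insert_left (by omega)]
    have hnotmem : t ∉ Finset.Ico (t + 1) (t + 1 + n) := by simp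
    by_cases hMt : M t
    · -- mistake round
      have hhV : h ∈ VSpace H x y t := mem_vspace hh x t
      have hfalse : h (x t) = false := by
        by_contra hc
        have htrue : h (x t) = true := by
          cases hb : h (x t) with
          | false => exact absurd hb hc
          | true => rfl
        exact hMt (iff_of_true ⟨h, hhV, htrue⟩ htrue)
      have hA : ∃ g ∈ VSpace H x y t, g (x t) = true := by
        by_contra hc
        exact hMt (iff_of_false hc (by simp [hfalse]))
      have hVsucc : VSpace H x y (t + 1) =
          {g | g ∈ VSpace H x y t ∧ g (x t) = false} := by
        simp only [VSpace]
        rw [if_pos hA]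
        simp only [hy, hfalse]
      have hcard : ((Finset.Ico t (t + (n + 1))).filter M).card =
          ((Finset.Ico (t + 1) (t + 1 + n)).filter M).card + 1 := by
        rw [hIco, Finset.filter_insert, if_pos hMt,
          Finset.card_insert_of_notMem (fun hc => hnotmem (Finset.mem_filter.mp hc).1)]
      rw [hcard]
      refine ⟨x t, ?_, alshatter_zero_width ?_ _⟩
      · have := ih (t + 1)
        rw [hVsucc] at this
        exact this
      · obtain ⟨g, hg, hgt⟩ := hA
        exact ⟨g, hg, hgt⟩
    · -- no mistake
      have hcard : ((Finset.Ico t (t + (n + 1))).filter M).card =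
          ((Finset.Ico (t + 1) (t + 1 + n)).filter M).card := by
        rw [hIco, Finset.filter_insert, if_neg hMt]
      rw [hcard]
      exact alshatter_mono _ _ (vspace_succ_subset x y t) (ih (t + 1))

end Aux

open Classical in
/-- the deterministic apple-tasting learner that predicts 1 iff some
hypothesis in its version space labels the current instance 1 (updating the version
space only upon predicting 1) makes at most AL_1(H) mistakes on any realizable stream. -/
theorem vspace_learner_mistake_bound {X : Type*} (H : Set (X → Bool)) :
    ∀ h ∈ H, ∀ x : ℕ → X, ∀ T : ℕ,
      ((((Finset.range T).filter fun t =>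
          ¬ ((∃ g ∈ VSpace H x (fun s => h (x s)) t, g (x t) = true) ↔
              h (x t) = true)).card : ℕ∞))
        ≤ ALdim H 1 := by
  intro h hh x T
  have key := vspace_key hh x T 0
  simp only [Nat.zero_add] at key
  have hr : Finset.range T = Finset.Ico 0 T := by
    rw [Finset.range_eq_Ico]
  rw [hr]
  exact le_sSup ⟨_, key, rfl⟩
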